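/- For every k ∈ ℕ, (W_k⁺·a·Σ*) ∩ (Σ*·b·W_k⁻) = W_k⁺·a·Σ*·b·W_k⁻; that is, whenever a word has a prefix of the form ua with u ∈ W_k⁺ and a suffix of the form bv with v ∈ W_k⁻, the distinguished occurrence of a can be chosen strictly before the distinguished occurrence of b. -/

import Mathlib

namespace ADTpaper

/-- The two-letter alphabet is `Bool`, with `a := true` and `b := false`;
`la` is the one-word language `{a}`. -/
def la : Language Bool := {[true]}

/-- The one-word language `{b}`. -/
def lb : Language Bool := {[false]}

/-- `μ(w)`: the number of occurrences of `a` minus the number of occurrences of `b`. -/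
def mu (w : List Bool) : ℤ := (w.count true : ℤ) - (w.count false : ℤ)

/-- `W_k⁺`. -/
def Wp (k : ℕ) : Language Bool :=
  {w | mu w = (k : ℤ) ∧ ∀ w', w' <+: w → 0 ≤ mu w' ∧ mu w' ≤ (k : ℤ)}

/-- `W_k⁻`. -/
def Wm (k : ℕ) : Language Bool :=
  {w | mu w = -(k : ℤ) ∧ ∀ w', w' <+: w → -(k : ℤ) ≤ mu w' ∧ mu w' ≤ 0}

lemma mu_append (u v : List Bool) : mu (u ++ v) = mu u + mu v := by
  simp [mu, List.count_append]; ring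

lemma mu_true : mu [true] = 1 := by simp [mu]

lemma mu_false : mu [false] = -1 := by simp [mu]

/-- `(W_k⁺·a·Σ*) ∩ (Σ*·b·W_k⁻) = W_k⁺·a·Σ*·b·W_k⁻`: the distinguished occurrence of `a`
may be chosen strictly before the distinguished occurrence of `b`. -/
theorem Wp_inter_Wm (k : ℕ) :
    (Wp k * la * ⊤) ⊓ (⊤ * lb * Wm k) = Wp k * la * ⊤ * lb * Wm k := by
  ext w
  constructor
  · rintro ⟨h1, h2⟩
    change w ∈ (Wp k * la * ⊤ : Language Bool) at h1
    change w ∈ (⊤ * lb * Wm k : Language Bool) at h2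
    rw [Language.mem_mul] at h1
    obtain ⟨pa, hpa, t, -, hw1⟩ := h1
    rw [Language.mem_mul] at hpa
    obtain ⟨p, hp, a1, ha1, rfl⟩ := hpa
    have ha1' : a1 = [true] := ha1
    subst ha1'
    rw [Language.mem_mul] at h2
    obtain ⟨sb, hsb, v, hv, hw2⟩ := h2
    rw [Language.mem_mul] at hsb
    obtain ⟨s, -, b1, hb1, rfl⟩ := hsb
    have hb1' : b1 = [false] := hb1
    subst hb1'
    -- both `p ++ [true]` and `s ++ [false]` are prefixes of `w`
    have hpre1 : p ++ [true] <+: w := ⟨t, by rw [← hw1]⟩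
    have hpre2 : s ++ [false] <+: w := ⟨v, by rw [← hw2]⟩
    rcases List.prefix_or_prefix_of_prefix hpre1 hpre2 with h | h
    · -- p ++ [true] <+: s ++ [false]
      obtain ⟨r, hr⟩ := h
      rcases List.eq_nil_or_concat r with rfl | ⟨r', c, rfl⟩
      · -- p ++ [true] = s ++ [false] : impossible
        exfalso
        have := congrArg List.getLast? hr
        simp at this
      · have hr' : (p ++ [true] ++ r') ++ [c] = s ++ [false] := by
          rw [← hr]; simp
        have hlen : (p ++ [true] ++ r').length = s.length := by
          have := congrArg List.length hr'
          simp at this; simp; omega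
        obtain ⟨hs, hc⟩ := List.append_inj hr' hlen
        -- good case: w = p ++ [true] ++ r' ++ [false] ++ v
        rw [Language.mem_mul]
        refine ⟨p ++ [true] ++ r' ++ [false], ?_, v, hv, ?_⟩
        · rw [Language.mem_mul]
          exact ⟨p ++ [true] ++ r', by
            rw [Language.mem_mul]
            exact ⟨p ++ [true], Language.append_mem_mul hp ha1, r', trivial, rfl⟩,
            [false], hb1, rfl⟩
        · rw [← hw2, ← hs]
    · -- s ++ [false] <+: p ++ [true] : the impossible configuration
      exfalso
      obtain ⟨r, hr⟩ := h
      rcases List.eq_nil_or_concat r with rfl | ⟨r', c, rfl⟩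
      · have := congrArg List.getLast? hr
        simp at this
      · have hr' : (s ++ [false] ++ r') ++ [c] = p ++ [true] := by
          rw [← hr]; simp
        have hlen : (s ++ [false] ++ r').length = p.length := by
          have := congrArg List.length hr'
          simp at this; simp; omega
        obtain ⟨hps, hc⟩ := List.append_inj hr' hlen
        -- p = s ++ [false] ++ r'
        have hveq : v = r' ++ [true] ++ t := by
          have : s ++ [false] ++ v = s ++ [false] ++ (r' ++ [true] ++ t) := by
            rw [hw2, ← hw1, ← hps]
            simp
          simpa using this
        have h1 : mu (s ++ [false]) ≤ (k : ℤ) :=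
          (hp.2 (s ++ [false]) ⟨r', hps⟩).2
        have h2 : mu (r' ++ [true]) ≤ 0 :=
          (hv.2 (r' ++ [true]) ⟨t, by rw [hveq]⟩).2
        have h3 : mu p = (k : ℤ) := hp.1
        rw [← hps, mu_append] at h3
        rw [mu_append, mu_true] at h2
        rw [mu_append, mu_false] at h1
        rw [mu_append, mu_false] at h3
        omega
  · rintro h
    rw [Language.mem_mul] at h
    obtain ⟨x, hx, v, hv, rfl⟩ := h
    rw [Language.mem_mul] at hx
    obtain ⟨y, hy, b1, hb1, rfl⟩ := hx
    have hb1' : b1 = [false] := hb1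
    subst hb1'
    rw [Language.mem_mul] at hy
    obtain ⟨pa, hpa, t, -, rfl⟩ := hy
    rw [Language.mem_mul] at hpa
    obtain ⟨p, hp, a1, ha1, rfl⟩ := hpa
    have ha1' : a1 = [true] := ha1
    subst ha1'
    constructor
    · change _ ∈ (Wp k * la * ⊤ : Language Bool)
      rw [Language.mem_mul]
      exact ⟨p ++ [true], Language.append_mem_mul hp ha1,
        t ++ [false] ++ v, trivial, by simp⟩
    · change _ ∈ (⊤ * lb * Wm k : Language Bool)
      rw [Language.mem_mul]
      exact ⟨p ++ [true] ++ t ++ [false],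
        Language.append_mem_mul (trivial : p ++ [true] ++ t ∈ (⊤ : Language Bool)) hb1,
        v, hv, by simp⟩

end ADTpaper
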